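/- (Left post-inverse of *.) For every Λ$-term M, M ↠Λ$ M^{*#}; and if M is a value, then also M ↠Λ$ M^{†♮}. -/

import Mathlib

namespace Shift0

/-! ### The calculus Λ$ (de Bruijn representation) -/

/-- Terms of Λ$: variables, λ-abstractions, freeze `$(M)`, application, thaw `S₀(M)`. -/
inductive Tm : Type
  | var : Nat → Tm
  | lam : Tm → Tm
  | freeze : Tm → Tm
  | app : Tm → Tm → Tm
  | thaw : Tm → Tm
  deriving DecidableEq

namespace Tm

/-- Values of Λ$: variables, abstractions and frozen terms. -/
inductive IsValue : Tm → Prop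
  | var (n : Nat) : IsValue (.var n)
  | lam (M : Tm) : IsValue (.lam M)
  | freeze (M : Tm) : IsValue (.freeze M)

/-- Nonvalues of Λ$: applications and thawed terms. -/
inductive IsNonvalue : Tm → Prop
  | app (M N : Tm) : IsNonvalue (.app M N)
  | thaw (M : Tm) : IsNonvalue (.thaw M)

/-- Boolean value test. -/
def isVal : Tm → Bool
  | .var _ => true
  | .lam _ => true
  | .freeze _ => true
  | .app _ _ => false
  | .thaw _ => false

/-- Lift (shift) the free de Bruijn variables `≥ d` up by one. -/
def lift (d : Nat) : Tm → Tm
  | .var n => if n < d then .var n else .var (n+1)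
  | .lam M => .lam (lift (d+1) M)
  | .freeze M => .freeze (lift d M)
  | .app M N => .app (lift d M) (lift d N)
  | .thaw M => .thaw (lift d M)

/-- Capture-avoiding substitution `M[N/x]` (for the de Bruijn variable `x`);
the variables above `x` are shifted down by one. -/
def subst : Tm → Nat → Tm → Tm
  | .var n, x, N => if n = x then N else if n < x then .var n else .var (n-1)
  | .lam M, x, N => .lam (subst M (x+1) (N.lift 0))
  | .freeze M, x, N => .freeze (subst M x N)
  | .app M L, x, N => .app (subst M x N) (subst L x N)
  | .thaw M, x, N => .thaw (subst M x N)

/-- `M $ N` is sugar for `$(N) M`. -/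
def dol (M N : Tm) : Tm := .app (.freeze N) M

/-- `let x = M in N` is sugar for `S₀k.((λx.(k $ N)) $ M)`;
here `N` has the let-bound variable as de Bruijn index `0`. -/
def letIn (M N : Tm) : Tm :=
  .thaw (.lam (dol (.lam (dol (.var 1) (N.lift 1))) (M.lift 0)))

end Tm

/-- Bindable contexts `J ::= [] M | V [] | S₀([])`. -/
inductive JCtx : Type
  | appL : Tm → JCtx
  | appR : Tm → JCtx
  | thaw : JCtx

namespace JCtx

/-- Well-formedness: in `V []` the term `V` must be a value. -/
def Wf : JCtx → Prop
  | .appL _ => True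
  | .appR V => V.IsValue
  | .thaw => True

/-- Plugging a term into a bindable context. -/
def plug : JCtx → Tm → Tm
  | .appL N, M => .app M N
  | .appR V, M => .app V M
  | .thaw, M => .thaw M

/-- Lift the free variables `≥ d` of a bindable context. -/
def lift (d : Nat) : JCtx → JCtx
  | .appL N => .appL (N.lift d)
  | .appR V => .appR (V.lift d)
  | .thaw => .thaw

end JCtx

/-- Pure contexts `K ::= [] | J[K]`, represented as a list of bindable
contexts (head outermost). -/
abbrev KCtx : Type := List JCtx

/-- Plugging a term into a pure context. -/
def KCtx.plug : KCtx → Tm → Tm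
  | [], M => M
  | (J :: K), M => J.plug (KCtx.plug K M)

/-- Well-formedness of a pure context. -/
def KCtx.Wf (K : KCtx) : Prop := ∀ J ∈ K, JCtx.Wf J

/-- Lift the free variables `≥ d` of a pure context. -/
def KCtx.lift (d : Nat) (K : KCtx) : KCtx := K.map (JCtx.lift d)

namespace Tm

/-- The basic contractions of Λ$. -/
inductive Contr : Tm → Tm → Prop
  | betav (M V : Tm) : V.IsValue → Contr (.app (.lam M) V) (M.subst 0 V)
  | etav (V : Tm) : V.IsValue → Contr (.lam (.app (V.lift 0) (.var 0))) V
  | dolv (V : Tm) : V.IsValue → Contr (.freeze V) (.lam (.app (.var 0) (V.lift 0)))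
  | dolsh (V : Tm) : V.IsValue → Contr (.freeze (.thaw V)) V
  | shdol (M : Tm) : Contr (.thaw (.freeze M)) M
  | pure (V : Tm) : V.IsValue → Contr (.thaw (.lam (.app (.var 0) (V.lift 0)))) V
  | bind (J : JCtx) (P : Tm) : J.Wf → P.IsNonvalue →
      Contr (J.plug P) (letIn P ((J.lift 0).plug (.var 0)))

/-- One-step reduction of Λ$: closure of the contractions under arbitrary
contexts (including under binders). -/
inductive Step : Tm → Tm → Prop
  | contr {M N : Tm} : Contr M N → Step M N
  | lam {M N : Tm} : Step M N → Step (.lam M) (.lam N)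
  | freeze {M N : Tm} : Step M N → Step (.freeze M) (.freeze N)
  | appL {M N L : Tm} : Step M N → Step (.app M L) (.app N L)
  | appR {M N L : Tm} : Step M N → Step (.app L M) (.app L N)
  | thaw {M N : Tm} : Step M N → Step (.thaw M) (.thaw N)

/-- Multi-step reduction `↠Λ$`. -/
def Steps : Tm → Tm → Prop := Relation.ReflTransGen Step

/-- Convertibility `=Λ$`: the equivalence generated by reduction. -/
def Equiv : Tm → Tm → Prop := Relation.EqvGen Step

end Tm

/-! ### The pure λ-calculus with βη -/

/-- Terms of the pure λ-calculus. -/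
inductive Lam : Type
  | var : Nat → Lam
  | lam : Lam → Lam
  | app : Lam → Lam → Lam
  deriving DecidableEq

namespace Lam

/-- Lift the free de Bruijn variables `≥ d` up by one. -/
def lift (d : Nat) : Lam → Lam
  | .var n => if n < d then .var n else .var (n+1)
  | .lam M => .lam (lift (d+1) M)
  | .app M N => .app (lift d M) (lift d N)

/-- Capture-avoiding substitution `M[N/x]`. -/
def subst : Lam → Nat → Lam → Lam
  | .var n, x, N => if n = x then N else if n < x then .var n else .var (n-1)
  | .lam M, x, N => .lam (subst M (x+1) (N.lift 0))
  | .app M L, x, N => .app (subst M x N) (subst L x N)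

/-- β and η contractions. -/
inductive Contr : Lam → Lam → Prop
  | beta (M N : Lam) : Contr (.app (.lam M) N) (M.subst 0 N)
  | eta (M : Lam) : Contr (.lam (.app (M.lift 0) (.var 0))) M

/-- One-step βη-reduction, closed under arbitrary contexts. -/
inductive Step : Lam → Lam → Prop
  | contr {M N : Lam} : Contr M N → Step M N
  | lam {M N : Lam} : Step M N → Step (.lam M) (.lam N)
  | appL {M N L : Lam} : Step M N → Step (.app M L) (.app N L)
  | appR {M N L : Lam} : Step M N → Step (.app L M) (.app L N)

/-- Multi-step βη-reduction `↠λ`. -/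
def Steps : Lam → Lam → Prop := Relation.ReflTransGen Step

/-- βη-convertibility `=λ`. -/
def Equiv : Lam → Lam → Prop := Relation.EqvGen Step

end Lam

end Shift0

namespace Shift0

/-! ### The CPS translation `* : Λ$ → λ` and its value part `†` -/

mutual

/-- The CPS translation `M*`.  It is the full unfolding of the equations
`V* = λk.k V†`, `J[P]* = λk.P* (λx.(J[x]* k))`, `(V W)* = V† W†` and
`(S₀(V))* = V†`. -/
def cps : Tm → Lam
  | .var n => .lam (.app (.var 0) (.var (n+1)))
  | .lam M => .lam (.app (.var 0) ((Lam.lam (cps M)).lift 0))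
  | .freeze M => .lam (.app (.var 0) ((cps M).lift 0))
  | .app M N =>
      if M.isVal then
        if N.isVal then .app (cpsV M) (cpsV N)
        else
          .lam (.app ((cps N).lift 0)
            (.lam (.app (.app (((cpsV M).lift 0).lift 0) (.var 0)) (.var 1))))
      else
        if N.isVal then
          .lam (.app ((cps M).lift 0)
            (.lam (.app (.app (.var 0) (((cpsV N).lift 0).lift 0)) (.var 1))))
        else
          .lam (.app ((cps M).lift 0)
            (.lam (.app
              (.lam (.app ((((cps N).lift 0).lift 0).lift 0)
                (.lam (.app (.app (.var 2) (.var 0)) (.var 1)))))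
              (.var 1))))
  | .thaw M =>
      if M.isVal then cpsV M
      else .lam (.app ((cps M).lift 0) (.lam (.app (.var 0) (.var 1))))

/-- The value part `V†` of the CPS translation (junk on nonvalues). -/
def cpsV : Tm → Lam
  | .var n => .var n
  | .lam M => .lam (cps M)
  | .freeze M => cps M
  | .app _ _ => .var 0
  | .thaw _ => .var 0

end

/-! ### The direct-style translation `# : λ → Λ$` and its auxiliary `♮` -/

namespace Lam

/-- Does the de Bruijn variable `x` occur free in the term? -/
def hasVar (x : Nat) : Lam → Bool
  | .var n => n = x
  | .lam M => hasVar (x+1) M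
  | .app M N => hasVar x M || hasVar x N

/-- Shift the free de Bruijn variables `> d` down by one
(inverse of `lift d` on terms not containing `d` free). -/
def lower (d : Nat) : Lam → Lam
  | .var n => if d < n then .var (n-1) else .var n
  | .lam M => .lam (lower (d+1) M)
  | .app M N => .app (lower d M) (lower d N)

/-- Size of a λ-term. -/
def size : Lam → Nat
  | .var _ => 1
  | .lam M => size M + 1
  | .app M N => size M + size N + 1

theorem size_lower (d : Nat) (M : Lam) : (lower d M).size = M.size := by
  induction M generalizing d with
  | var n => simp only [lower]; split <;> rfl
  | lam M ih => simp [lower, size, ih]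
  | app M N ihM ihN => simp [lower, size, ihM, ihN]

end Lam

mutual

/-- The direct-style translation `M#`; the case `(λx.x N)# = N♮` (with
`x ∉ FV(N)`) is rendered by checking that de Bruijn variable `0` does not
occur in `N` and lowering the remaining variables. -/
def ds : Lam → Tm
  | .var n => .thaw (.var n)
  | .app M N => .app (nat M) (nat N)
  | .lam (.app (.var 0) N) =>
      if N.hasVar 0 then .thaw (.lam (.app (.var 0) (nat N)))
      else nat (N.lower 0)
  | .lam M => .thaw (.lam (ds M))
termination_by M => M.size
decreasing_by all_goals simp [Lam.size, Lam.size_lower] <;> omega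

/-- The auxiliary direct-style translation `M♮`. -/
def nat : Lam → Tm
  | .var n => .var n
  | .lam M => .lam (ds M)
  | .app M N => .freeze (.app (nat M) (nat N))
termination_by M => M.size
decreasing_by all_goals simp [Lam.size, Lam.size_lower] <;> omega

end

end Shift0

namespace Shift0

/-! ### Materzok's calculus λ$ -/

/-- Terms of λ$: variables, abstractions, applications, `S₀x.e`
(the body is under a binder) and `e $ e'`. -/
inductive LTm : Type
  | var : Nat → LTm
  | lam : LTm → LTm
  | app : LTm → LTm → LTm
  | shift : LTm → LTm
  | dollar : LTm → LTm → LTm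
  deriving DecidableEq

namespace LTm

/-- Values of λ$: variables and abstractions. -/
inductive IsValue : LTm → Prop
  | var (n : Nat) : IsValue (.var n)
  | lam (e : LTm) : IsValue (.lam e)

/-- Lift the free de Bruijn variables `≥ d` up by one. -/
def lift (d : Nat) : LTm → LTm
  | .var n => if n < d then .var n else .var (n+1)
  | .lam e => .lam (lift (d+1) e)
  | .app e f => .app (lift d e) (lift d f)
  | .shift e => .shift (lift (d+1) e)
  | .dollar e f => .dollar (lift d e) (lift d f)

/-- Capture-avoiding substitution `e[v/x]`. -/
def subst : LTm → Nat → LTm → LTm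
  | .var n, x, N => if n = x then N else if n < x then .var n else .var (n-1)
  | .lam e, x, N => .lam (subst e (x+1) (N.lift 0))
  | .app e f, x, N => .app (subst e x N) (subst f x N)
  | .shift e, x, N => .shift (subst e (x+1) (N.lift 0))
  | .dollar e f, x, N => .dollar (subst e x N) (subst f x N)

end LTm

/-- Pure contexts of λ$: `E ::= [] | E e | v E | E $ e`. -/
inductive ECtx : Type
  | hole : ECtx
  | appL : ECtx → LTm → ECtx
  | appR : LTm → ECtx → ECtx
  | dolL : ECtx → LTm → ECtx

namespace ECtx

/-- Well-formedness: in `v E` the term `v` must be a value. -/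
def Wf : ECtx → Prop
  | .hole => True
  | .appL E _ => E.Wf
  | .appR v E => v.IsValue ∧ E.Wf
  | .dolL E _ => E.Wf

/-- Plugging a term into a pure context of λ$. -/
def plug : ECtx → LTm → LTm
  | .hole, e => e
  | .appL E f, e => .app (E.plug e) f
  | .appR v E, e => .app v (E.plug e)
  | .dolL E f, e => .dollar (E.plug e) f

/-- Lift the free variables `≥ d` of a pure context. -/
def lift (d : Nat) : ECtx → ECtx
  | .hole => .hole
  | .appL E f => .appL (E.lift d) (f.lift d)
  | .appR v E => .appR (v.lift d) (E.lift d)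
  | .dolL E f => .dolL (E.lift d) (f.lift d)

end ECtx

namespace LTm

/-- The axioms of λ$. -/
inductive Ax : LTm → LTm → Prop
  | betav (e v : LTm) : v.IsValue → Ax (.app (.lam e) v) (e.subst 0 v)
  | etav (v : LTm) : v.IsValue → Ax (.lam (.app (v.lift 0) (.var 0))) v
  | dolv (v w : LTm) : v.IsValue → w.IsValue → Ax (.dollar v w) (.app v w)
  | dolE (v : LTm) (E : ECtx) (e : LTm) : v.IsValue → E.Wf →
      Ax (.dollar v (E.plug e))
         (.dollar (.lam (.dollar (v.lift 0) ((E.lift 0).plug (.var 0)))) e)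
  | betad (v e : LTm) : v.IsValue → Ax (.dollar v (.shift e)) (e.subst 0 v)
  | etad (e : LTm) : Ax (.shift (.dollar (.var 0) (e.lift 0))) e

/-- The axioms applied in an arbitrary context. -/
inductive AStep : LTm → LTm → Prop
  | ax {e f : LTm} : Ax e f → AStep e f
  | lam {e f : LTm} : AStep e f → AStep (.lam e) (.lam f)
  | appL {e f g : LTm} : AStep e f → AStep (.app e g) (.app f g)
  | appR {e f g : LTm} : AStep e f → AStep (.app g e) (.app g f)
  | shift {e f : LTm} : AStep e f → AStep (.shift e) (.shift f)
  | dolL {e f g : LTm} : AStep e f → AStep (.dollar e g) (.dollar f g)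
  | dolR {e f g : LTm} : AStep e f → AStep (.dollar g e) (.dollar g f)

/-- The equational theory `=λ$` generated by the axioms. -/
def Equiv : LTm → LTm → Prop := Relation.EqvGen AStep

end LTm

/-- The embedding `ι : λ$ → Λ$`. -/
def iota : LTm → Tm
  | .var n => .var n
  | .lam e => .lam (iota e)
  | .app e f => .app (iota e) (iota f)
  | .shift e => .thaw (.lam (iota e))
  | .dollar e f => .app (.freeze (iota f)) (iota e)

/-- The translation `π : Λ$ → λ$`. -/
def pi : Tm → LTm
  | .var n => .var n
  | .lam M => .lam (pi M)
  | .freeze M => .lam (.dollar (.var 0) ((pi M).lift 0))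
  | .app M N => .app (pi M) (pi N)
  | .thaw M => .app (.lam (.shift (.app (.var 1) (.var 0)))) (pi M)

/-- Materzok's CPS translation `⟦·⟧ : λ$ → λ` (with the value translation
`⟪x⟫ = x`, `⟪λx.e⟫ = λx.⟦e⟧` inlined). -/
def mcps : LTm → Lam
  | .var n => .lam (.app (.var 0) (.var (n+1)))
  | .lam e => .lam (.app (.var 0) ((Lam.lam (mcps e)).lift 0))
  | .app e f => .lam (.app ((mcps e).lift 0)
      (.lam (.app (((mcps f).lift 0).lift 0)
        (.lam (.app (.app (.var 1) (.var 0)) (.var 2))))))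
  | .shift e => .lam (mcps e)
  | .dollar e f => .lam (.app ((mcps e).lift 0)
      (.lam (.app (.app (((mcps f).lift 0).lift 0) (.var 0)) (.var 1))))

end Shift0

namespace Shift0

set_option linter.unusedTactic false
set_option linter.unreachableTactic false
set_option linter.unnecessarySeqFocus false


/-! #### Lam infrastructure -/
namespace Lam

theorem lift_lift : ∀ (M : Lam) {i j : Nat}, i ≤ j →
    (M.lift j).lift i = (M.lift i).lift (j+1) := by
  intro M
  induction M with
  | var n =>
      intro i j hij
      simp only [lift]
      repeat' (first | (simp only [lift]) | split)
      all_goals (first | rfl | (congr 1; omega) | (exfalso; omega))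
  | lam M ih =>
      intro i j hij
      simp only [lift, ih (by omega : i+1 ≤ j+1)]
  | app M N ihM ihN =>
      intro i j hij
      simp only [lift, ihM hij, ihN hij]

theorem hasVar_lift_self : ∀ (M : Lam) (d : Nat), hasVar d (M.lift d) = false := by
  intro M
  induction M with
  | var n =>
      intro d
      simp only [lift]
      split <;> simp [hasVar] <;> omega
  | lam M ih =>
      intro d
      simpa [lift, hasVar] using ih (d+1)
  | app M N ihM ihN =>
      intro d
      simp [lift, hasVar, ihM, ihN]

theorem hasVar_lift_lt : ∀ (M : Lam) {i d : Nat}, i < d →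
    hasVar i (M.lift d) = hasVar i M := by
  intro M
  induction M with
  | var n =>
      intro i d h
      simp only [lift]
      split <;> simp [hasVar] <;> omega
  | lam M ih =>
      intro i d h
      simp only [lift, hasVar]
      exact ih (by omega)
  | app M N ihM ihN =>
      intro i d h
      simp [lift, hasVar, ihM h, ihN h]

theorem hasVar_lift_ge : ∀ (M : Lam) {i d : Nat}, d ≤ i →
    hasVar (i+1) (M.lift d) = hasVar i M := by
  intro M
  induction M with
  | var n =>
      intro i d h
      simp only [lift]
      split <;> simp [hasVar] <;> omega
  | lam M ih =>
      intro i d h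
      simp only [lift, hasVar]
      exact ih (by omega)
  | app M N ihM ihN =>
      intro i d h
      simp [lift, hasVar, ihM h, ihN h]

theorem lower_lift_self : ∀ (M : Lam) (d : Nat), (M.lift d).lower d = M := by
  intro M
  induction M with
  | var n =>
      intro d
      simp only [lift]
      repeat' split
      all_goals simp only [lower]
      all_goals repeat' split
      all_goals (first | rfl | (congr 1; omega) | (exfalso; omega))
  | lam M ih =>
      intro d
      simp [lift, lower, ih]
  | app M N ihM ihN =>
      intro d
      simp [lift, lower, ihM, ihN]

theorem lift_lower : ∀ (M : Lam) {d : Nat}, hasVar d M = false →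
    (M.lower d).lift d = M := by
  intro M
  induction M with
  | var n =>
      intro d h
      simp only [hasVar, decide_eq_false_iff_not] at h
      simp only [lower]
      repeat' split
      all_goals simp only [lift]
      all_goals repeat' split
      all_goals (first | rfl | (congr 1; omega) | (exfalso; omega))
  | lam M ih =>
      intro d h
      simp only [hasVar] at h
      simp [lower, lift, ih h]
  | app M N ihM ihN =>
      intro d h
      simp only [hasVar, Bool.or_eq_false_iff] at h
      simp [lower, lift, ihM h.1, ihN h.2]

theorem lower_lift : ∀ (M : Lam) {c d : Nat}, hasVar c M = false →
    (M.lift (c+d+1)).lower c = (M.lower c).lift (c+d) := by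
  intro M
  induction M with
  | var n =>
      intro c d h
      simp only [hasVar, decide_eq_false_iff_not] at h
      simp only [lift, lower]
      repeat' split
      all_goals simp only [lower, lift]
      all_goals repeat' split
      all_goals (first | rfl | (congr 1; omega) | (exfalso; omega))
  | lam M ih =>
      intro c d h
      simp only [hasVar] at h
      simp only [lift, lower]
      have h2 := ih (c := c+1) (d := d) h
      rw [show c+d+1+1 = (c+1)+d+1 by omega, h2, show c+1+d = c+d+1 by omega]
  | app M N ihM ihN =>
      intro c d h
      simp only [hasVar, Bool.or_eq_false_iff] at h
      simp [lift, lower, ihM h.1, ihN h.2]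

end Lam

/-! #### Tm infrastructure -/
namespace Tm

/-- Size of a Λ$-term. -/
def size : Tm → Nat
  | .var _ => 1
  | .lam M => size M + 1
  | .freeze M => size M + 1
  | .app M N => size M + size N + 1
  | .thaw M => size M + 1

theorem size_pos : ∀ M : Tm, 0 < M.size := by
  intro M; cases M <;> simp [size]

theorem size_lift : ∀ (M : Tm) (d : Nat), (M.lift d).size = M.size := by
  intro M
  induction M with
  | var n =>
      intro d
      simp only [lift]; split <;> rfl
  | lam M ih => intro d; simp [lift, size, ih]
  | freeze M ih => intro d; simp [lift, size, ih]
  | app M N ihM ihN => intro d; simp [lift, size, ihM, ihN]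
  | thaw M ih => intro d; simp [lift, size, ih]

theorem lift_lift : ∀ (M : Tm) {i j : Nat}, i ≤ j →
    (M.lift j).lift i = (M.lift i).lift (j+1) := by
  intro M
  induction M with
  | var n =>
      intro i j hij
      simp only [lift]
      repeat' (first | (simp only [lift]) | split)
      all_goals (first | rfl | (congr 1; omega) | (exfalso; omega))
  | lam M ih =>
      intro i j hij
      simp only [lift, ih (by omega : i+1 ≤ j+1)]
  | freeze M ih => intro i j hij; simp only [lift, ih hij]
  | app M N ihM ihN => intro i j hij; simp only [lift, ihM hij, ihN hij]
  | thaw M ih => intro i j hij; simp only [lift, ih hij]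

theorem IsValue.lift {V : Tm} (h : V.IsValue) (d : Nat) : (V.lift d).IsValue := by
  cases h with
  | var n =>
      simp only [Tm.lift]; split <;> exact .var _
  | lam M => exact .lam _
  | freeze M => exact .freeze _

theorem IsNonvalue.lift {P : Tm} (h : P.IsNonvalue) (d : Nat) : (P.lift d).IsNonvalue := by
  cases h with
  | app M N => exact .app _ _
  | thaw M => exact .thaw _

theorem isVal_lift : ∀ (M : Tm) (d : Nat), (M.lift d).isVal = M.isVal := by
  intro M d
  cases M <;> first | rfl | (simp only [lift]; split <;> rfl)

theorem isVal_true_iff {M : Tm} : M.isVal = true ↔ M.IsValue := by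
  cases M with
  | var n => exact iff_of_true rfl (.var n)
  | lam M => exact iff_of_true rfl (.lam M)
  | freeze M => exact iff_of_true rfl (.freeze M)
  | app M N => exact iff_of_false (by simp [isVal]) (fun h => by cases h)
  | thaw M => exact iff_of_false (by simp [isVal]) (fun h => by cases h)

theorem isVal_false_iff {M : Tm} : M.isVal = false ↔ M.IsNonvalue := by
  cases M with
  | var n => exact iff_of_false (by simp [isVal]) (fun h => by cases h)
  | lam M => exact iff_of_false (by simp [isVal]) (fun h => by cases h)
  | freeze M => exact iff_of_false (by simp [isVal]) (fun h => by cases h)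
  | app M N => exact iff_of_true rfl (.app M N)
  | thaw M => exact iff_of_true rfl (.thaw M)

/-! #### Steps combinators -/

theorem steps_refl (M : Tm) : Steps M M := Relation.ReflTransGen.refl

theorem steps_trans {M N L : Tm} (h1 : Steps M N) (h2 : Steps N L) : Steps M L :=
  Relation.ReflTransGen.trans h1 h2

theorem steps_single {M N : Tm} (h : Step M N) : Steps M N :=
  Relation.ReflTransGen.single h

theorem steps_head {M N L : Tm} (h1 : Step M N) (h2 : Steps N L) : Steps M L :=
  Relation.ReflTransGen.head h1 h2

theorem steps_lam {M N : Tm} (h : Steps M N) : Steps (.lam M) (.lam N) :=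
  Relation.ReflTransGen.lift Tm.lam (fun _ _ => Step.lam) _ _ h

theorem steps_freeze {M N : Tm} (h : Steps M N) : Steps (.freeze M) (.freeze N) :=
  Relation.ReflTransGen.lift Tm.freeze (fun _ _ => Step.freeze) _ _ h

theorem steps_thaw {M N : Tm} (h : Steps M N) : Steps (.thaw M) (.thaw N) :=
  Relation.ReflTransGen.lift Tm.thaw (fun _ _ => Step.thaw) _ _ h

theorem steps_appL {M N L : Tm} (h : Steps M N) : Steps (.app M L) (.app N L) :=
  Relation.ReflTransGen.lift (fun x => Tm.app x L) (fun _ _ => Step.appL) _ _ h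

theorem steps_appR {M N L : Tm} (h : Steps M N) : Steps (.app L M) (.app L N) :=
  Relation.ReflTransGen.lift (fun x => Tm.app L x) (fun _ _ => Step.appR) _ _ h

end Tm



theorem Lam.lift_lift0 (X : Lam) (d : Nat) :
    (X.lift d).lift 0 = (X.lift 0).lift (d+1) :=
  Lam.lift_lift X (Nat.zero_le d)

theorem Lam.lift_lift0₂ (X : Lam) (d : Nat) :
    ((X.lift d).lift 0).lift 0 = ((X.lift 0).lift 0).lift (d+2) := by
  rw [Lam.lift_lift0 X d, Lam.lift_lift0 (X.lift 0) (d+1)]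

theorem Lam.lift_lift0₃ (X : Lam) (d : Nat) :
    (((X.lift d).lift 0).lift 0).lift 0 = (((X.lift 0).lift 0).lift 0).lift (d+3) := by
  rw [Lam.lift_lift0₂ X d, Lam.lift_lift0 ((X.lift 0).lift 0) (d+2)]

theorem Lam.lift0_ne_var0 (X : Lam) : X.lift 0 ≠ .var 0 := by
  cases X <;> simp [Lam.lift]

theorem cps_cpsV_lift : ∀ (M : Tm) (d : Nat),
    cps (M.lift d) = (cps M).lift d ∧
      (M.IsValue → cpsV (M.lift d) = (cpsV M).lift d) := by
  intro M
  induction M with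
  | var n =>
      intro d
      constructor
      · simp only [Tm.lift, cps]
        repeat' (first | (simp only [cps, Lam.lift]) | split)
        all_goals (first | rfl | (exfalso; omega) | (simp; omega))
      · intro _
        simp only [Tm.lift, cpsV]
        repeat' (first | (simp only [cpsV, Lam.lift]) | split)
        all_goals (first | rfl | (exfalso; omega) | (simp; omega))
  | lam M ih =>
      intro d
      have h1 := (ih (d+1)).1
      constructor
      · show cps (.lam (M.lift (d+1))) = (cps (.lam M)).lift d
        simp only [cps, h1, Lam.lift]
        rw [Lam.lift_lift (cps M) (by omega : 1 ≤ d+1)]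
        simp
      · intro _
        show cpsV (.lam (M.lift (d+1))) = (cpsV (.lam M)).lift d
        simp only [cpsV, h1, Lam.lift]
  | freeze M ih =>
      intro d
      have h1 := (ih d).1
      constructor
      · show cps (.freeze (M.lift d)) = (cps (.freeze M)).lift d
        simp only [cps, h1, Lam.lift, Lam.lift_lift0]
        simp
      · intro _
        show cpsV (.freeze (M.lift d)) = (cpsV (.freeze M)).lift d
        simp only [cpsV, h1]
  | app M N ihM ihN =>
      intro d
      refine ⟨?_, fun h => by cases h⟩
      have hM1 := (ihM d).1
      have hN1 := (ihN d).1
      show cps (.app (M.lift d) (N.lift d)) = (cps (.app M N)).lift d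
      by_cases h1 : M.isVal <;> by_cases h2 : N.isVal
      · have hM2 := (ihM d).2 (Tm.isVal_true_iff.1 h1)
        have hN2 := (ihN d).2 (Tm.isVal_true_iff.1 h2)
        simp only [cps, Tm.isVal_lift, h1, h2, if_true, hM2, hN2, Lam.lift]
      · have hM2 := (ihM d).2 (Tm.isVal_true_iff.1 h1)
        simp only [cps, Tm.isVal_lift, h1, h2, if_true, if_false,
          Bool.false_eq_true, hM2, hN1, Lam.lift,
          Lam.lift_lift0, Lam.lift_lift0₂]
        simp
      · have hN2 := (ihN d).2 (Tm.isVal_true_iff.1 h2)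
        simp only [cps, Tm.isVal_lift, h1, h2, if_true, if_false,
          Bool.false_eq_true, hN2, hM1, Lam.lift,
          Lam.lift_lift0, Lam.lift_lift0₂]
        simp
      · simp only [cps, Tm.isVal_lift, h1, h2, if_true, if_false,
          Bool.false_eq_true, hM1, hN1, Lam.lift,
          Lam.lift_lift0, Lam.lift_lift0₂, Lam.lift_lift0₃]
        simp
  | thaw M ih =>
      intro d
      refine ⟨?_, fun h => by cases h⟩
      have hM1 := (ih d).1
      show cps (.thaw (M.lift d)) = (cps (.thaw M)).lift d
      by_cases h1 : M.isVal
      · have hM2 := (ih d).2 (Tm.isVal_true_iff.1 h1)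
        simp only [cps, Tm.isVal_lift, h1, if_true, hM2]
      · simp only [cps, Tm.isVal_lift, h1, if_true, if_false,
          Bool.false_eq_true, hM1, Lam.lift, Lam.lift_lift0]
        simp

theorem cps_lift (M : Tm) (d : Nat) : cps (M.lift d) = (cps M).lift d :=
  (cps_cpsV_lift M d).1

theorem cpsV_lift {M : Tm} (h : M.IsValue) (d : Nat) :
    cpsV (M.lift d) = (cpsV M).lift d :=
  (cps_cpsV_lift M d).2 h

/-- `ds` on a λ-abstraction whose body is not of the special form `x N`. -/
theorem ds_lam_nospecial (M : Lam) (h : ∀ B, M ≠ .app (.var 0) B) :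
    ds (.lam M) = .thaw (.lam (ds M)) := by
  match M with
  | .var n => simp [ds]
  | .lam M => simp [ds]
  | .app (.var (n+1)) B => simp [ds]
  | .app (.var 0) B => exact absurd rfl (h B)
  | .app (.lam A) B => simp [ds]
  | .app (.app A A') B => simp [ds]

theorem nat_isValue (e : Lam) : (nat e).IsValue := by
  cases e with
  | var n => simp only [nat]; exact .var n
  | lam M => simp only [nat]; exact .lam _
  | app M N => simp only [nat]; exact .freeze _

theorem lift_head_ne (M : Lam) (d : Nat) (h : ∀ B, M ≠ .app (.var 0) B) :
    ∀ B, M.lift (d+1) ≠ .app (.var 0) B := by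
  intro B hEq
  match M with
  | .var k =>
      simp only [Lam.lift] at hEq
      split at hEq <;> cases hEq
  | .lam M' => simp [Lam.lift] at hEq
  | .app A B' =>
      cases A with
      | var k =>
          cases k with
          | zero => exact h B' rfl
          | succ k =>
              simp only [Lam.lift] at hEq
              split at hEq <;> simp_all
      | lam A' => simp [Lam.lift] at hEq
      | app A1 A2 => simp [Lam.lift] at hEq

theorem ds_nat_lift : ∀ (n : Nat) (e : Lam), e.size ≤ n → ∀ d,
    ds (e.lift d) = (ds e).lift d ∧ nat (e.lift d) = (nat e).lift d := by
  intro n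
  induction n with
  | zero =>
      intro e he
      exfalso
      cases e <;> simp [Lam.size] at he
  | succ n ih =>
      intro e he d
      match e with
      | .var k =>
          constructor
          · simp only [Lam.lift]
            split <;> rename_i hkd <;> simp [ds, Tm.lift, hkd]
          · simp only [Lam.lift]
            split <;> rename_i hkd <;> simp [nat, Tm.lift, hkd]
      | .app A B =>
          have hA := (ih A (by simp [Lam.size] at he; omega) d).2
          have hB := (ih B (by simp [Lam.size] at he; omega) d).2
          constructor
          · simp [Lam.lift, ds, Tm.lift, hA, hB]
          · simp [Lam.lift, nat, Tm.lift, ds, hA, hB]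
      | .lam M =>
          have hM : M.size ≤ n := by simp [Lam.size] at he; omega
          have hlift : (Lam.lam M).lift d = .lam (M.lift (d+1)) := rfl
          have hds : ds ((Lam.lam M).lift d) = (ds (.lam M)).lift d := by
            by_cases hsp : ∃ B, M = .app (.var 0) B
            · obtain ⟨B, rfl⟩ := hsp
              have hlift2 : (Lam.app (.var 0) B).lift (d+1)
                  = .app (.var 0) (B.lift (d+1)) := by
                simp [Lam.lift]
              rw [hlift, hlift2]
              have hv : (B.lift (d+1)).hasVar 0 = B.hasVar 0 :=
                Lam.hasVar_lift_lt B (by omega)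
              have hBsize : B.size ≤ n := by simp [Lam.size] at hM; omega
              by_cases hB : B.hasVar 0
              · have hBn := (ih B hBsize (d+1)).2
                simp [ds, hv, hB, hBn, Tm.lift]
              · have h0 : B.hasVar 0 = false := by simpa using hB
                have hlow : (B.lift (d+1)).lower 0 = (B.lower 0).lift d := by
                  have := Lam.lower_lift B (c := 0) (d := d) h0
                  simpa using this
                have hBn := (ih (B.lower 0)
                  (by rw [Lam.size_lower]; exact hBsize) d).2
                simp [ds, hv, h0, hlow, hBn]
            · push_neg at hsp
              have hsp' := lift_head_ne M d hsp
              have hM' := (ih M hM (d+1)).1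
              rw [hlift, ds_lam_nospecial _ hsp', ds_lam_nospecial _ hsp, hM']
              rfl
          refine ⟨hds, ?_⟩
          rw [hlift]
          have hM' := (ih M hM (d+1)).1
          simp [nat, Tm.lift, hM']

theorem ds_lift (e : Lam) (d : Nat) : ds (e.lift d) = (ds e).lift d :=
  (ds_nat_lift e.size e le_rfl d).1

theorem nat_lift (e : Lam) (d : Nat) : nat (e.lift d) = (nat e).lift d :=
  (ds_nat_lift e.size e le_rfl d).2



theorem cps_value {V : Tm} (h : V.IsValue) :
    cps V = .lam (.app (.var 0) ((cpsV V).lift 0)) := by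
  cases h with
  | var n => simp [cps, cpsV, Lam.lift]
  | lam M => rfl
  | freeze M => rfl

theorem ds_cps_value {V : Tm} (h : V.IsValue) : ds (cps V) = nat (cpsV V) := by
  rw [cps_value h]
  have h0 : ((cpsV V).lift 0).hasVar 0 = false := Lam.hasVar_lift_self _ 0
  simp [ds, h0, Lam.lower_lift_self]

theorem nat_cps_value {V : Tm} (h : V.IsValue) :
    nat (cps V) = .lam (.app (.var 0) ((nat (cpsV V)).lift 0)) := by
  rw [cps_value h]
  simp [nat, ds, nat_lift]

theorem body_nospecial (A K : Lam) (hA : A ≠ .var 0) :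
    ∀ B, Lam.app A K ≠ .app (.var 0) B := by
  intro B h
  cases h
  exact hA rfl

theorem Tm.lift_lift00 (X : Tm) : (X.lift 0).lift 1 = (X.lift 0).lift 0 :=
  (Tm.lift_lift X (le_refl 0)).symm

theorem bind_appR {V P : Tm} (hV : V.IsValue) (hP : P.IsNonvalue) :
    Tm.Step (.app V P)
      (.thaw (.lam (.app (.freeze (P.lift 0))
        (.lam (.app (.freeze (.app ((V.lift 0).lift 1) (.var 0))) (.var 1)))))) := by
  have h := Tm.Step.contr (Tm.Contr.bind (.appR V) P hV hP)
  simpa [JCtx.plug, JCtx.lift, Tm.letIn, Tm.dol, Tm.lift] using h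

theorem bind_appL {P : Tm} (W : Tm) (hP : P.IsNonvalue) :
    Tm.Step (.app P W)
      (.thaw (.lam (.app (.freeze (P.lift 0))
        (.lam (.app (.freeze (.app (.var 0) ((W.lift 0).lift 1))) (.var 1)))))) := by
  have h := Tm.Step.contr (Tm.Contr.bind (.appL W) P trivial hP)
  simpa [JCtx.plug, JCtx.lift, Tm.letIn, Tm.dol, Tm.lift] using h

theorem bind_thaw {P : Tm} (hP : P.IsNonvalue) :
    Tm.Step (.thaw P)
      (.thaw (.lam (.app (.freeze (P.lift 0))
        (.lam (.app (.freeze (.thaw (.var 0))) (.var 1)))))) := by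
  have h := Tm.Step.contr (Tm.Contr.bind .thaw P trivial hP)
  simpa [JCtx.plug, JCtx.lift, Tm.letIn, Tm.dol, Tm.lift] using h

/-- `S2` derived from the induction hypothesis. -/
theorem value_steps_natV (n : Nat)
    (ih : ∀ M : Tm, M.size ≤ n →
      Tm.Steps M (ds (cps M)) ∧ Tm.Steps (.freeze M) (nat (cps M))) :
    ∀ V : Tm, V.size ≤ n + 1 → V.IsValue → Tm.Steps V (nat (cpsV V)) := by
  intro V hs hV
  cases hV with
  | var k =>
      simp only [cpsV, nat]
      exact Tm.steps_refl _
  | lam M =>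
      show Tm.Steps (.lam M) (nat (.lam (cps M)))
      simp only [nat]
      exact Tm.steps_lam (ih M (by simp [Tm.size] at hs; omega)).1
  | freeze M =>
      show Tm.Steps (.freeze M) (nat (cps M))
      exact (ih M (by simp [Tm.size] at hs; omega)).2

theorem main : ∀ (n : Nat) (M : Tm), M.size ≤ n →
    Tm.Steps M (ds (cps M)) ∧ Tm.Steps (.freeze M) (nat (cps M)) := by
  intro n
  induction n with
  | zero =>
      intro M hM
      exact absurd hM (by have := Tm.size_pos M; omega)
  | succ n ih =>
      intro M hs
      have ihS2 := value_steps_natV n ih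
      -- helper: reductions of frozen lifted nonvalues
      have key : ∀ (M' : Tm), M'.size ≤ n → ∀ d : Nat,
          Tm.Steps (.freeze (M'.lift d)) ((nat (cps M')).lift d) := by
        intro M' h d
        have := (ih (M'.lift d) (by rw [Tm.size_lift]; exact h)).2
        rwa [cps_lift, nat_lift] at this
      -- value case, handled uniformly
      have valcase : M.IsValue →
          Tm.Steps M (ds (cps M)) ∧ Tm.Steps (.freeze M) (nat (cps M)) := by
        intro hV
        refine ⟨?_, ?_⟩
        · rw [ds_cps_value hV]
          exact ihS2 M hs hV
        · rw [nat_cps_value hV]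
          refine Tm.steps_head (Tm.Step.contr (Tm.Contr.dolv M hV)) ?_
          refine Tm.steps_lam (Tm.steps_appR ?_)
          have := ihS2 (M.lift 0) (by rw [Tm.size_lift]; exact hs) (hV.lift 0)
          rwa [cpsV_lift hV, nat_lift] at this
      cases M with
      | var k => exact valcase (.var k)
      | lam M₁ => exact valcase (.lam M₁)
      | freeze M₁ => exact valcase (.freeze M₁)
      | app M₁ M₂ =>
          have hs1 : M₁.size ≤ n := by simp [Tm.size] at hs; omega
          have hs2 : M₂.size ≤ n := by simp [Tm.size] at hs; omega
          by_cases v1 : M₁.isVal = true <;> by_cases v2 : M₂.isVal = true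
          · -- both values
            have hV1 := Tm.isVal_true_iff.1 v1
            have hV2 := Tm.isVal_true_iff.1 v2
            have e : cps (.app M₁ M₂) = .app (cpsV M₁) (cpsV M₂) := by
              simp [cps, v1, v2]
            have s1 : Tm.Steps (.app M₁ M₂) (.app (nat (cpsV M₁)) (nat (cpsV M₂))) :=
              Tm.steps_trans (Tm.steps_appL (ihS2 M₁ (by omega) hV1))
                (Tm.steps_appR (ihS2 M₂ (by omega) hV2))
            rw [e]
            exact ⟨by simpa [ds] using s1, by simpa [nat, ds] using Tm.steps_freeze s1⟩
          · -- M₁ value, M₂ nonvalue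
            have hV1 := Tm.isVal_true_iff.1 v1
            have hN2 : M₂.IsNonvalue := Tm.isVal_false_iff.1 (by simpa using v2)
            have e : cps (.app M₁ M₂) =
                .lam (.app ((cps M₂).lift 0)
                  (.lam (.app (.app (((cpsV M₁).lift 0).lift 0) (.var 0)) (.var 1)))) := by
              simp [cps, v1, v2]
            set B2 : Tm := .lam (.app ((nat (cps M₂)).lift 0)
              (.lam (.app (.freeze (.app (((nat (cpsV M₁)).lift 0).lift 0) (.var 0)))
                (.var 1)))) with hB2
            have en : nat (cps (.app M₁ M₂)) = B2 := by
              rw [e]; simp [nat, ds, nat_lift, hB2]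
            have ed : ds (cps (.app M₁ M₂)) = .thaw B2 := by
              rw [e, ds_lam_nospecial _ (body_nospecial _ _ (Lam.lift0_ne_var0 _))]
              simp [ds, nat, nat_lift, hB2]
            have hbind := bind_appR hV1 hN2
            have hC : Tm.Steps
                (.lam (.app (.freeze (.app ((M₁.lift 0).lift 1) (.var 0))) (.var 1)))
                (.lam (.app (.freeze (.app (((nat (cpsV M₁)).lift 0).lift 0) (.var 0)))
                  (.var 1))) := by
              rw [Tm.lift_lift00]
              refine Tm.steps_lam (Tm.steps_appL (Tm.steps_freeze (Tm.steps_appL ?_)))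
              have := ihS2 ((M₁.lift 0).lift 0)
                (by rw [Tm.size_lift, Tm.size_lift]; omega) ((hV1.lift 0).lift 0)
              rwa [cpsV_lift (hV1.lift 0), cpsV_lift hV1, nat_lift, nat_lift] at this
            have hcore : Tm.Steps
                (.lam (.app (.freeze (M₂.lift 0))
                  (.lam (.app (.freeze (.app ((M₁.lift 0).lift 1) (.var 0))) (.var 1)))))
                B2 := by
              exact Tm.steps_lam (Tm.steps_trans
                (Tm.steps_appL (key M₂ hs2 0)) (Tm.steps_appR hC))
            refine ⟨?_, ?_⟩
            · rw [ed]
              exact Tm.steps_head hbind (Tm.steps_thaw hcore)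
            · rw [en]
              exact Tm.steps_head (Tm.Step.freeze hbind)
                (Tm.steps_head (Tm.Step.contr (Tm.Contr.dolsh _ (.lam _))) hcore)
          · -- M₁ nonvalue, M₂ value
            have hN1 : M₁.IsNonvalue := Tm.isVal_false_iff.1 (by simpa using v1)
            have hV2 := Tm.isVal_true_iff.1 v2
            have e : cps (.app M₁ M₂) =
                .lam (.app ((cps M₁).lift 0)
                  (.lam (.app (.app (.var 0) (((cpsV M₂).lift 0).lift 0)) (.var 1)))) := by
              simp [cps, v1, v2]
            set B2 : Tm := .lam (.app ((nat (cps M₁)).lift 0)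
              (.lam (.app (.freeze (.app (.var 0) (((nat (cpsV M₂)).lift 0).lift 0)))
                (.var 1)))) with hB2
            have en : nat (cps (.app M₁ M₂)) = B2 := by
              rw [e]; simp [nat, ds, nat_lift, hB2]
            have ed : ds (cps (.app M₁ M₂)) = .thaw B2 := by
              rw [e, ds_lam_nospecial _ (body_nospecial _ _ (Lam.lift0_ne_var0 _))]
              simp [ds, nat, nat_lift, hB2]
            have hbind := bind_appL M₂ hN1
            have hC : Tm.Steps
                (.lam (.app (.freeze (.app (.var 0) ((M₂.lift 0).lift 1))) (.var 1)))
                (.lam (.app (.freeze (.app (.var 0) (((nat (cpsV M₂)).lift 0).lift 0)))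
                  (.var 1))) := by
              rw [Tm.lift_lift00]
              refine Tm.steps_lam (Tm.steps_appL (Tm.steps_freeze (Tm.steps_appR ?_)))
              have := ihS2 ((M₂.lift 0).lift 0)
                (by rw [Tm.size_lift, Tm.size_lift]; omega) ((hV2.lift 0).lift 0)
              rwa [cpsV_lift (hV2.lift 0), cpsV_lift hV2, nat_lift, nat_lift] at this
            have hcore : Tm.Steps
                (.lam (.app (.freeze (M₁.lift 0))
                  (.lam (.app (.freeze (.app (.var 0) ((M₂.lift 0).lift 1))) (.var 1)))))
                B2 :=
              Tm.steps_lam (Tm.steps_trans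
                (Tm.steps_appL (key M₁ hs1 0)) (Tm.steps_appR hC))
            refine ⟨?_, ?_⟩
            · rw [ed]
              exact Tm.steps_head hbind (Tm.steps_thaw hcore)
            · rw [en]
              exact Tm.steps_head (Tm.Step.freeze hbind)
                (Tm.steps_head (Tm.Step.contr (Tm.Contr.dolsh _ (.lam _))) hcore)
          · -- both nonvalues
            have hN1 : M₁.IsNonvalue := Tm.isVal_false_iff.1 (by simpa using v1)
            have hN2 : M₂.IsNonvalue := Tm.isVal_false_iff.1 (by simpa using v2)
            have e : cps (.app M₁ M₂) =
                .lam (.app ((cps M₁).lift 0)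
                  (.lam (.app
                    (.lam (.app ((((cps M₂).lift 0).lift 0).lift 0)
                      (.lam (.app (.app (.var 2) (.var 0)) (.var 1)))))
                    (.var 1)))) := by
              simp [cps, v1, v2]
            set D : Tm := .lam (.app (.freeze (.app (.var 2) (.var 0))) (.var 1)) with hD
            set B2 : Tm := .lam (.app ((nat (cps M₁)).lift 0)
              (.lam (.app (.lam (.app ((((nat (cps M₂)).lift 0).lift 0).lift 0) D))
                (.var 1)))) with hB2
            have en : nat (cps (.app M₁ M₂)) = B2 := by
              rw [e]; simp [nat, ds, nat_lift, hD, hB2]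
            have ed : ds (cps (.app M₁ M₂)) = .thaw B2 := by
              rw [e, ds_lam_nospecial _ (body_nospecial _ _ (Lam.lift0_ne_var0 _))]
              simp [ds, nat, nat_lift, hD, hB2]
            have hbind := bind_appL M₂ hN1
            -- the frozen inner nonvalue application
            have hQ : Tm.Steps
                (.freeze (.app (.var 0) ((M₂.lift 0).lift 1)))
                (.lam (.app ((((nat (cps M₂)).lift 0).lift 0).lift 0) D)) := by
              rw [Tm.lift_lift00]
              have hbind2 := bind_appR (V := .var 0) (.var 0) ((hN2.lift 0).lift 0)
              have hbind2' : Tm.Step (.app (.var 0) ((M₂.lift 0).lift 0))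
                  (.thaw (.lam (.app (.freeze (((M₂.lift 0).lift 0).lift 0)) D))) := by
                simpa [Tm.lift, hD] using hbind2
              refine Tm.steps_head (Tm.Step.freeze hbind2') ?_
              refine Tm.steps_head (Tm.Step.contr (Tm.Contr.dolsh _ (.lam _))) ?_
              refine Tm.steps_lam (Tm.steps_appL ?_)
              have h3 := key ((M₂.lift 0).lift 0)
                (by rw [Tm.size_lift, Tm.size_lift]; exact hs2) 0
              rwa [cps_lift, cps_lift, nat_lift, nat_lift] at h3
            have hC : Tm.Steps
                (.lam (.app (.freeze (.app (.var 0) ((M₂.lift 0).lift 1))) (.var 1)))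
                (.lam (.app (.lam (.app ((((nat (cps M₂)).lift 0).lift 0).lift 0) D))
                  (.var 1))) :=
              Tm.steps_lam (Tm.steps_appL hQ)
            have hcore : Tm.Steps
                (.lam (.app (.freeze (M₁.lift 0))
                  (.lam (.app (.freeze (.app (.var 0) ((M₂.lift 0).lift 1))) (.var 1)))))
                B2 :=
              Tm.steps_lam (Tm.steps_trans
                (Tm.steps_appL (key M₁ hs1 0)) (Tm.steps_appR hC))
            refine ⟨?_, ?_⟩
            · rw [ed]
              exact Tm.steps_head hbind (Tm.steps_thaw hcore)
            · rw [en]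
              exact Tm.steps_head (Tm.Step.freeze hbind)
                (Tm.steps_head (Tm.Step.contr (Tm.Contr.dolsh _ (.lam _))) hcore)
      | thaw M₀ =>
          have hs0 : M₀.size ≤ n := by simp [Tm.size] at hs; omega
          by_cases v0 : M₀.isVal = true
          · -- thawed value
            have hV0 := Tm.isVal_true_iff.1 v0
            have e : cps (.thaw M₀) = cpsV M₀ := by simp [cps, v0]
            refine ⟨?_, ?_⟩
            · rw [e]
              cases hV0 with
              | var k =>
                  simp only [cpsV, ds]
                  exact Tm.steps_refl _
              | freeze M₁ =>
                  show Tm.Steps (.thaw (.freeze M₁)) (ds (cps M₁))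
                  exact Tm.steps_head (Tm.Step.contr (Tm.Contr.shdol M₁))
                    (ih M₁ (by simp [Tm.size] at hs0 ⊢; omega)).1
              | lam M₁ =>
                  show Tm.Steps (.thaw (.lam M₁)) (ds (.lam (cps M₁)))
                  have hs1 : M₁.size ≤ n := by simp [Tm.size] at hs0; omega
                  by_cases hsp : ∃ B, cps M₁ = .app (.var 0) B
                  · obtain ⟨B, hB⟩ := hsp
                    have h1 : Tm.Steps M₁ (.app (.var 0) (nat B)) := by
                      have := (ih M₁ hs1).1
                      rw [hB] at this
                      simpa [ds, nat] using this
                    rw [hB]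
                    by_cases hv : B.hasVar 0 = true
                    · have e2 : ds (.lam (.app (.var 0) B))
                          = .thaw (.lam (.app (.var 0) (nat B))) := by simp [ds, hv]
                      rw [e2]
                      exact Tm.steps_thaw (Tm.steps_lam h1)
                    · have h0 : B.hasVar 0 = false := by simpa using hv
                      have e2 : ds (.lam (.app (.var 0) B)) = nat (B.lower 0) := by
                        simp [ds, h0]
                      rw [e2]
                      have hBL : nat B = (nat (B.lower 0)).lift 0 := by
                        conv_lhs => rw [← Lam.lift_lower B h0]
                        rw [nat_lift]
                      refine Tm.steps_trans (Tm.steps_thaw (Tm.steps_lam h1)) ?_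
                      rw [hBL]
                      exact Tm.steps_single (Tm.Step.contr
                        (Tm.Contr.pure _ (nat_isValue _)))
                  · push_neg at hsp
                    rw [ds_lam_nospecial _ hsp]
                    exact Tm.steps_thaw (Tm.steps_lam (ih M₁ hs1).1)
            · rw [e]
              exact Tm.steps_head (Tm.Step.contr (Tm.Contr.dolsh M₀ hV0))
                (ihS2 M₀ (by omega) hV0)
          · -- thawed nonvalue
            have hN0 : M₀.IsNonvalue := Tm.isVal_false_iff.1 (by simpa using v0)
            have e : cps (.thaw M₀) =
                .lam (.app ((cps M₀).lift 0) (.lam (.app (.var 0) (.var 1)))) := by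
              simp [cps, v0]
            set B2 : Tm := .lam (.app ((nat (cps M₀)).lift 0)
              (.lam (.app (.var 0) (.var 1)))) with hB2
            have en : nat (cps (.thaw M₀)) = B2 := by
              rw [e]; simp [nat, ds, nat_lift, hB2]
            have ed : ds (cps (.thaw M₀)) = .thaw B2 := by
              rw [e, ds_lam_nospecial _ (body_nospecial _ _ (Lam.lift0_ne_var0 _))]
              simp [ds, nat, nat_lift, hB2]
            have hbind := bind_thaw hN0
            have hC : Tm.Steps
                (.lam (.app (.freeze (.thaw (.var 0))) (.var 1)))
                (.lam (.app (.var 0) (.var 1))) :=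
              Tm.steps_lam (Tm.steps_appL (Tm.steps_single
                (Tm.Step.contr (Tm.Contr.dolsh _ (.var 0)))))
            have hcore : Tm.Steps
                (.lam (.app (.freeze (M₀.lift 0))
                  (.lam (.app (.freeze (.thaw (.var 0))) (.var 1)))))
                B2 :=
              Tm.steps_lam (Tm.steps_trans
                (Tm.steps_appL (key M₀ hs0 0)) (Tm.steps_appR hC))
            refine ⟨?_, ?_⟩
            · rw [ed]
              exact Tm.steps_head hbind (Tm.steps_thaw hcore)
            · rw [en]
              exact Tm.steps_head (Tm.Step.freeze hbind)
                (Tm.steps_head (Tm.Step.contr (Tm.Contr.dolsh _ (.lam _))) hcore)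

/-- **Left post-inverse of `*`.**  For every Λ$-term `M`, `M ↠Λ$ M^{*#}`;
and if `M` is a value, then also `M ↠Λ$ M^{†♮}`. -/
theorem cps_left_post_inverse (M : Tm) :
    Tm.Steps M (ds (cps M)) ∧ (M.IsValue → Tm.Steps M (nat (cpsV M))) :=
  ⟨(main M.size M le_rfl).1,
    fun h => value_steps_natV M.size (fun M' h' => main M.size M' h') M
      (by omega) h⟩

end Shift0
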